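/- arXiv:1610.02557 — 3 statements merged into one kernel-verified Lean document; each statement's English description precedes it below -/
import Mathlib

section
/- Let K be a compact Hausdorff space, let C(K) denote the Banach lattice of continuous real-valued functions on K with supremum norm and pointwise order, and let ε ≥ 0. For a linear map T : C(K) → C(K), the following are equivalent: (1) T is ε-band preserving; (2) for every x ∈ C(K) and every t ∈ K with x(t) = 0, one has |(T x)(t)| ≤ ε·‖x‖. -/
open Set Finset

/-- `T` is `ε`-band preserving. -/
def IsEpsBandPreserving {X : Type*} [NormedAddCommGroup X] [Lattice X]
    (ε : ℝ) (T : X → X) : Prop :=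
  ∀ x y : X, 0 ≤ y → |x| ⊓ y = 0 → ‖|T x| ⊓ y‖ ≤ ε * ‖x‖

namespace EpsBPAux

lemma abs_le_abs_add_of_mul_nonneg {a b : ℝ} (h : 0 ≤ a * b) : |b| ≤ |a + b| := by
  rcases le_or_gt 0 b with hb | hb
  · rcases le_or_gt 0 a with ha | ha
    · rw [abs_of_nonneg hb, abs_of_nonneg (by linarith)]; linarith
    · have hb0 : b = 0 := by
        by_contra h'
        have hb' : 0 < b := lt_of_le_of_ne hb (Ne.symm h')
        exact absurd h (not_le.mpr (mul_neg_of_neg_of_pos ha hb'))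
      simp [hb0]
  · have ha : a ≤ 0 := by
      by_contra h'
      push_neg at h'
      exact absurd h (not_le.mpr (mul_neg_of_pos_of_neg h' hb))
    rw [abs_of_neg hb, abs_of_nonpos (by linarith)]; linarith



structure BPStage {K : Type*} [TopologicalSpace K] [CompactSpace K] (t : K) (n : ℕ) where
  B : Set K
  u : C(K, ℝ)
  s : K
  g : C(K, ℝ)
  openB : IsOpen B
  tmem : t ∈ B
  ut : u t = 0
  unorm : ‖u‖ ≤ (2 : ℝ)⁻¹ ^ n
  usupp : ∀ x ∉ B, u x = 0
  big : (n : ℝ) + 1 ≤ |g t|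
  sne : s ≠ t
  sclose : |g s - g t| ≤ 1

noncomputable def bpChain {K : Type*} [TopologicalSpace K] [CompactSpace K] {t : K}
    (st0 : BPStage t 0) (F : ∀ n, BPStage t n → BPStage t (n + 1)) : ∀ n, BPStage t n
  | 0 => st0
  | n + 1 => F n (bpChain st0 F n)

set_option maxHeartbeats 1600000

variable {K : Type*} [TopologicalSpace K] [CompactSpace K] [T2Space K]
variable {ε : ℝ} {T : C(K, ℝ) →ₗ[ℝ] C(K, ℝ)}

variable {K : Type*} [TopologicalSpace K] [CompactSpace K] [T2Space K]
variable {ε : ℝ} {T : C(K, ℝ) →ₗ[ℝ] C(K, ℝ)}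

lemma off_support (hT : IsEpsBandPreserving ε ⇑T) {v : C(K, ℝ)} {U : Set K}
    (hU : IsOpen U) (hv : ∀ s ∈ U, v s = 0) {s₀ : K} (hs₀ : s₀ ∈ U) :
    |T v s₀| ≤ ε * ‖v‖ := by
  obtain ⟨φ, hφ0, hφ1, hφm⟩ := exists_continuous_zero_one_of_isClosed
    (isClosed_compl_iff.mpr hU) (isClosed_singleton (x := s₀))
    (by rw [Set.disjoint_singleton_right]; exact fun h => h hs₀)
  set c : ℝ := |T v s₀| with hc
  have hc0 : 0 ≤ c := abs_nonneg _
  set y : C(K, ℝ) := c • φ with hy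
  have hy0 : (0 : C(K, ℝ)) ≤ y := by
    rw [ContinuousMap.le_def]
    intro a
    simp only [hy, ContinuousMap.smul_apply, ContinuousMap.zero_apply, smul_eq_mul]
    exact mul_nonneg hc0 (hφm a).1
  have hdisj : |v| ⊓ y = 0 := by
    ext a
    simp only [ContinuousMap.inf_apply, ContinuousMap.abs_apply, ContinuousMap.zero_apply,
      ContinuousMap.smul_apply, smul_eq_mul, hy]
    by_cases ha : a ∈ U
    · rw [hv a ha, abs_zero]
      exact inf_eq_left.mpr (mul_nonneg hc0 (hφm a).1)
    · have : φ a = 0 := hφ0 ha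
      rw [this, mul_zero]
      exact inf_eq_right.mpr (abs_nonneg _)
  have hkey := hT v y hy0 hdisj
  have heval : (|T v| ⊓ y) s₀ = c := by
    simp only [ContinuousMap.inf_apply, ContinuousMap.abs_apply, hy,
      ContinuousMap.smul_apply, smul_eq_mul]
    have h1 : φ s₀ = 1 := hφ1 (mem_singleton s₀)
    rw [h1, mul_one, ← hc, inf_idem]
  have := ContinuousMap.norm_coe_le_norm (|T v| ⊓ y) s₀
  rw [Real.norm_eq_abs, heval, abs_of_nonneg hc0] at this
  exact this.trans hkey

lemma cutoff (hε : 0 ≤ ε) (hT : IsEpsBandPreserving ε ⇑T) {t : K} {u : C(K, ℝ)} (hut : u t = 0)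
    {η : ℝ} (hη : 0 < η) {B : Set K} (hB : IsOpen B) (htB : t ∈ B) :
    ∃ u' : C(K, ℝ), u' t = 0 ∧ ‖u'‖ ≤ η ∧ (∀ x ∉ B, u' x = 0) ∧
      |T u t| - ε * ‖u‖ ≤ |T u' t| := by
  set W : Set K := B ∩ {x | |u x| < η} with hW
  have hWopen : IsOpen W := hB.inter (isOpen_lt u.continuous.abs continuous_const)
  have htW : t ∈ W := ⟨htB, by simp [hut, hη]⟩
  obtain ⟨V, hVo, htV, hVW⟩ := normal_exists_closure_subset isClosed_singleton hWopen
    (singleton_subset_iff.mpr htW)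
  obtain ⟨φ, hφ0, hφ1, hφm⟩ := exists_continuous_zero_one_of_isClosed
    hWopen.isClosed_compl isClosed_closure
    (Set.disjoint_left.mpr fun a haW haV => haW (hVW haV))
  refine ⟨φ * u, ?_, ?_, ?_, ?_⟩
  · simp [hut]
  · rw [ContinuousMap.norm_le _ hη.le]
    intro x
    rw [Real.norm_eq_abs, ContinuousMap.mul_apply, abs_mul]
    by_cases hx : x ∈ W
    · have h1 : |φ x| ≤ 1 := abs_le.mpr ⟨by linarith [(hφm x).1], (hφm x).2⟩
      calc |φ x| * |u x| ≤ 1 * |u x| := by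
            exact mul_le_mul_of_nonneg_right h1 (abs_nonneg _)
        _ = |u x| := one_mul _
        _ ≤ η := le_of_lt hx.2
    · have : φ x = 0 := hφ0 hx
      rw [this, abs_zero, zero_mul]
      exact hη.le
  · intro x hx
    have hxW : x ∉ W := fun h => hx h.1
    have : φ x = 0 := hφ0 hxW
    simp [this]
  · have hvan : ∀ s ∈ V, (u - φ * u) s = 0 := by
      intro s hs
      have : φ s = 1 := hφ1 (subset_closure hs)
      simp [this]
    have htVmem : t ∈ V := htV (mem_singleton t)
    have h1 : |T (u - φ * u) t| ≤ ε * ‖u - φ * u‖ := off_support hT hVo hvan htVmem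
    have h2 : ‖u - φ * u‖ ≤ ‖u‖ := by
      rw [ContinuousMap.norm_le _ (norm_nonneg u)]
      intro x
      rw [Real.norm_eq_abs, ContinuousMap.sub_apply, ContinuousMap.mul_apply]
      have : u x - φ x * u x = (1 - φ x) * u x := by ring
      rw [this, abs_mul]
      have h1' : |1 - φ x| ≤ 1 := abs_le.mpr ⟨by linarith [(hφm x).2], by linarith [(hφm x).1]⟩
      calc |1 - φ x| * |u x| ≤ 1 * |u x| := mul_le_mul_of_nonneg_right h1' (abs_nonneg _)
        _ = |u x| := one_mul _
        _ ≤ ‖u‖ := by simpa using ContinuousMap.norm_coe_le_norm u x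
    have h3 : T u t = T (φ * u) t + T (u - φ * u) t := by
      have : T u = T (φ * u) + T (u - φ * u) := by
        rw [← map_add]; congr 1; ring
      rw [this, ContinuousMap.add_apply]
    have h4 : |T u t| ≤ |T (φ * u) t| + |T (u - φ * u) t| := h3 ▸ abs_add_le _ _
    have h5 : ε * ‖u - φ * u‖ ≤ ε * ‖u‖ := mul_le_mul_of_nonneg_left h2 hε
    linarith

lemma pointwise_bound (hε : 0 ≤ ε) (hT : IsEpsBandPreserving ε ⇑T) (t : K) :
    ∃ C : ℝ, 0 ≤ C ∧ ∀ u : C(K, ℝ), u t = 0 → ‖u‖ ≤ 1 → |T u t| ≤ C := by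
  by_cases hiso : IsOpen ({t} : Set K)
  · refine ⟨ε, hε, fun u hu hn => ?_⟩
    have h1 : |T u t| ≤ ε * ‖u‖ :=
      off_support hT hiso (fun s hs => by rwa [mem_singleton_iff.mp hs]) (mem_singleton t)
    calc |T u t| ≤ ε * ‖u‖ := h1
      _ ≤ ε * 1 := mul_le_mul_of_nonneg_left hn hε
      _ = ε := mul_one ε
  · by_contra hcon
    push_neg at hcon
    have hcon' : ∀ C : ℝ, ∃ u : C(K, ℝ), u t = 0 ∧ ‖u‖ ≤ 1 ∧ C < |T u t| := by
      intro C
      obtain ⟨u, h1, h2, h3⟩ := hcon (max C 0) (le_max_right _ _)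
      exact ⟨u, h1, h2, lt_of_le_of_lt (le_max_left _ _) h3⟩
    have hclus : ∀ O : Set K, IsOpen O → t ∈ O → ∃ s, s ∈ O ∧ s ≠ t := by
      intro O hO htO
      by_contra hs
      push_neg at hs
      apply hiso
      have hOt : O = {t} := subset_antisymm (fun s hs' => hs s hs') (singleton_subset_iff.mpr htO)
      rwa [← hOt]
    -- pick a building block
    have hpick : ∀ (n : ℕ) (B : Set K), IsOpen B → t ∈ B → ∀ S : ℝ, ∃ u' : C(K, ℝ),
        u' t = 0 ∧ ‖u'‖ ≤ (2 : ℝ)⁻¹ ^ n ∧ (∀ x ∉ B, u' x = 0) ∧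
        ((n : ℝ) + 1 ≤ |T u' t|) ∧ |T u' t| ≤ |S + T u' t| := by
      intro n B hB htB S
      obtain ⟨u, hu0, hun, hbig⟩ := hcon' ((n : ℝ) + 1 + ε)
      obtain ⟨w, hw0, hwn, hwsupp, hwlb⟩ :=
        cutoff hε hT hu0 (pow_pos (by norm_num : (0:ℝ) < 2⁻¹) n) hB htB
      have hεu : ε * ‖u‖ ≤ ε := mul_le_of_le_one_right hε hun
      have hwbig : (n : ℝ) + 1 ≤ |T w t| := by linarith
      by_cases hsgn : 0 ≤ S * (T w t)
      · exact ⟨w, hw0, hwn, hwsupp, hwbig, abs_le_abs_add_of_mul_nonneg hsgn⟩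
      · refine ⟨-w, by simp [hw0], by simpa using hwn,
          fun x hx => by simp [hwsupp x hx], ?_, ?_⟩
        · rw [map_neg, ContinuousMap.neg_apply, abs_neg]; exact hwbig
        · have hx : 0 ≤ S * ((T (-w)) t) := by
            rw [map_neg, ContinuousMap.neg_apply, mul_neg]
            push_neg at hsgn
            linarith
          exact abs_le_abs_add_of_mul_nonneg hx
    -- build a stage
    have hbuild : ∀ (n : ℕ) (Bp : Set K) (gp : C(K, ℝ)), IsOpen Bp → t ∈ Bp →
        ∃ st : BPStage t n, st.B = Bp ∧ st.g = gp + T st.u := by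
      intro n Bp gp hBp htBp
      obtain ⟨u', h0, hn, hsupp, hbig, hsign⟩ := hpick n Bp hBp htBp (gp t)
      have hgt : (n : ℝ) + 1 ≤ |(gp + T u') t| := by
        rw [ContinuousMap.add_apply]
        exact le_trans hbig hsign
      have hO : IsOpen {x | |(gp + T u') x - (gp + T u') t| < 1} :=
        isOpen_lt ((gp + T u').continuous.sub continuous_const).abs continuous_const
      have htO : t ∈ {x | |(gp + T u') x - (gp + T u') t| < 1} := by simp
      obtain ⟨s, hsO, hst⟩ := hclus _ hO htO
      exact ⟨⟨Bp, u', s, gp + T u', hBp, htBp, h0, hn, hsupp, hgt, hst, le_of_lt hsO⟩, rfl, rfl⟩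
    obtain ⟨st0, hB0, hg0⟩ := hbuild 0 univ 0 isOpen_univ (mem_univ t)
    have hstep : ∀ n (st : BPStage t n), ∃ st' : BPStage t (n + 1),
        st'.B ⊆ st.B ∧ st.s ∉ closure st'.B ∧ st'.g = st.g + T st'.u := by
      intro n st
      obtain ⟨V, W, hV, hW, htV, hsW, hVW⟩ := t2_separation st.sne.symm
      have hsV : st.s ∉ closure V := by
        intro h
        have hsub : V ⊆ Wᶜ := fun a ha haW => (Set.disjoint_left.mp hVW ha) haW
        exact (closure_minimal hsub hW.isClosed_compl h) hsW
      obtain ⟨st', hB', hg'⟩ := hbuild (n + 1) (st.B ∩ V) st.g (st.openB.inter hV)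
        ⟨st.tmem, htV⟩
      refine ⟨st', ?_, ?_, hg'⟩
      · rw [hB']; exact inter_subset_left
      · intro h
        exact hsV (closure_mono (hB' ▸ inter_subset_right) h)
    choose F hF using hstep
    have hcs : ∀ n, (bpChain st0 F (n + 1)).B ⊆ (bpChain st0 F n).B ∧
        (bpChain st0 F n).s ∉ closure (bpChain st0 F (n + 1)).B ∧
        (bpChain st0 F (n + 1)).g = (bpChain st0 F n).g + T ((bpChain st0 F (n + 1)).u) :=
      fun n => hF n (bpChain st0 F n)
    have hmono : ∀ N k, N ≤ k → (bpChain st0 F k).B ⊆ (bpChain st0 F N).B := by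
      intro N k hNk
      induction k, hNk using Nat.le_induction with
      | base => exact subset_rfl
      | succ k hk ih => exact subset_trans (hcs k).1 ih
    have hgsum : ∀ n, (bpChain st0 F n).g = ∑ k ∈ Finset.range (n + 1),
        T ((bpChain st0 F k).u) := by
      intro n
      induction n with
      | zero =>
        show st0.g = _
        rw [hg0]
        simp [Finset.range_one]
        rfl
      | succ n ih => rw [(hcs n).2.2, ih, ← Finset.sum_range_succ]
    have hsummable : Summable (fun k => (bpChain st0 F k).u) :=
      Summable.of_norm_bounded (g := fun k => (2 : ℝ)⁻¹ ^ k)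
        (summable_geometric_of_lt_one (by norm_num) (by norm_num))
        (fun k => (bpChain st0 F k).unorm)
    obtain ⟨UU, hUU⟩ : ∃ UU : C(K, ℝ), UU = ∑' k, (bpChain st0 F k).u := ⟨_, rfl⟩
    have hest : ∀ N : ℕ, (N : ℝ) - ε ≤ ‖T UU‖ := by
      intro N
      obtain ⟨sN, hsN⟩ : ∃ sN : K, sN = (bpChain st0 F N).s := ⟨_, rfl⟩
      have hshift : Summable (fun k => (bpChain st0 F (k + (N + 1))).u) :=
        (summable_nat_add_iff (N + 1)).mpr hsummable
      obtain ⟨rN, hrN⟩ : ∃ rN : C(K, ℝ), rN = ∑' k, (bpChain st0 F (k + (N + 1))).u := ⟨_, rfl⟩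
      have hsplit : (∑ k ∈ Finset.range (N + 1), (bpChain st0 F k).u) + rN = UU := by
        rw [hUU, hrN]
        exact Summable.sum_add_tsum_nat_add (N + 1) hsummable
      have hTU : T UU = (bpChain st0 F N).g + T rN := by
        rw [← hsplit, map_add, map_sum, ← hgsum N]
      -- rN vanishes outside B_{N+1}
      have htail : ∀ x, x ∉ (bpChain st0 F (N + 1)).B → rN x = 0 := by
        intro x hx
        rw [hrN]
        have hz : ∀ k, (bpChain st0 F (k + (N + 1))).u x = 0 := fun k =>
          (bpChain st0 F (k + (N + 1))).usupp x
            (fun hmem => hx (hmono (N + 1) (k + (N + 1)) (by omega) hmem))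
        have : (ContinuousMap.evalCLM ℝ x) (∑' k, (bpChain st0 F (k + (N + 1))).u) =
            ∑' k, (ContinuousMap.evalCLM ℝ x) ((bpChain st0 F (k + (N + 1))).u) :=
          ContinuousLinearMap.map_tsum _ hshift
        have h2 : ∀ k, (ContinuousMap.evalCLM ℝ x) ((bpChain st0 F (k + (N + 1))).u) = 0 :=
          fun k => hz k
        rw [show (∑' k, (bpChain st0 F (k + (N + 1))).u) x
            = (ContinuousMap.evalCLM ℝ x) (∑' k, (bpChain st0 F (k + (N + 1))).u) from rfl, this]
        simp [h2]
      have hsNnot : sN ∉ closure (bpChain st0 F (N + 1)).B := hsN ▸ (hcs N).2.1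
      have hrsmall : |T rN sN| ≤ ε * ‖rN‖ :=
        off_support hT isClosed_closure.isOpen_compl
          (fun x hx => htail x (fun hm => hx (subset_closure hm))) hsNnot
      have hrnorm : ‖rN‖ ≤ (2 : ℝ)⁻¹ ^ N := by
        have hnorms : Summable (fun k => ‖(bpChain st0 F (k + (N + 1))).u‖) := by
          apply Summable.of_nonneg_of_le (fun k => norm_nonneg _)
            (fun k => (bpChain st0 F (k + (N + 1))).unorm)
          exact (summable_nat_add_iff (N + 1)).mpr
            (summable_geometric_of_lt_one (by norm_num) (by norm_num))
        calc ‖rN‖ ≤ ∑' k, ‖(bpChain st0 F (k + (N + 1))).u‖ := by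
              rw [hrN]; exact norm_tsum_le_tsum_norm hnorms
          _ ≤ ∑' k : ℕ, (2 : ℝ)⁻¹ ^ (k + (N + 1)) := by
              apply Summable.tsum_le_tsum (fun k => (bpChain st0 F (k + (N + 1))).unorm) hnorms
              exact (summable_nat_add_iff (N + 1)).mpr
                (summable_geometric_of_lt_one (by norm_num) (by norm_num))
          _ = (2 : ℝ)⁻¹ ^ (N + 1) * (1 - 2⁻¹)⁻¹ := by
              simp_rw [pow_add]
              rw [tsum_mul_right, tsum_geometric_of_lt_one (by norm_num) (by norm_num),
                mul_comm]
          _ = (2 : ℝ)⁻¹ ^ N := by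
              rw [pow_succ]
              norm_num
              ring
      have hrεsmall : |T rN sN| ≤ ε := by
        have h1 : ε * ‖rN‖ ≤ ε * 1 := by
          apply mul_le_mul_of_nonneg_left _ hε
          calc ‖rN‖ ≤ (2 : ℝ)⁻¹ ^ N := hrnorm
            _ ≤ 1 := by
              apply pow_le_one₀ <;> norm_num
        linarith
      have hgsN : (N : ℝ) ≤ |(bpChain st0 F N).g sN| := by
        rw [hsN]
        have h1 := (bpChain st0 F N).big
        have h2 := (bpChain st0 F N).sclose
        have h3 := abs_sub_abs_le_abs_sub ((bpChain st0 F N).g t)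
          ((bpChain st0 F N).g ((bpChain st0 F N).s))
        rw [abs_sub_comm] at h3
        linarith
      have happly : T UU sN = (bpChain st0 F N).g sN + T rN sN := by
        rw [hTU, ContinuousMap.add_apply]
      have h4 : (N : ℝ) - ε ≤ |T UU sN| := by
        have := abs_sub_abs_le_abs_sub ((bpChain st0 F N).g sN) (-(T rN sN))
        rw [abs_neg, sub_neg_eq_add, ← happly] at this
        linarith
      have h5 := ContinuousMap.norm_coe_le_norm (T UU) sN
      rw [Real.norm_eq_abs] at h5
      linarith
    obtain ⟨N, hN⟩ := exists_nat_gt (‖T UU‖ + ε)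
    have := hest N
    linarith

end EpsBPAux

open EpsBPAux in
/-- For a linear map `T` on `C(K)`, `K` compact Hausdorff: `T` is `ε`-band preserving iff
`|(T x)(t)| ≤ ε ‖x‖` whenever `x(t) = 0`. -/
theorem epsBP_iff_pointwise_on_CK {K : Type*} [TopologicalSpace K] [CompactSpace K]
    [T2Space K] (ε : ℝ) (hε : 0 ≤ ε) (T : C(K, ℝ) →ₗ[ℝ] C(K, ℝ)) :
    IsEpsBandPreserving ε ⇑T ↔
      ∀ x : C(K, ℝ), ∀ t : K, x t = 0 → |(T x) t| ≤ ε * ‖x‖ := by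
  constructor
  · intro hT x t hx
    obtain ⟨C, hC0, hC⟩ := pointwise_bound hε hT t
    apply le_of_forall_sub_le
    intro δ hδ
    have hC1 : (0 : ℝ) < C + 1 := by linarith
    have hη : 0 < δ / (C + 1) := div_pos hδ hC1
    obtain ⟨u', h0, hn, -, hlb⟩ := cutoff hε hT hx hη isOpen_univ (mem_univ t)
    have hsc : |T u' t| ≤ δ / (C + 1) * C := by
      have h1 : ‖(δ / (C + 1))⁻¹ • u'‖ ≤ 1 := by
        rw [show ‖(δ / (C + 1))⁻¹ • u'‖ = ‖(δ / (C + 1))⁻¹‖ * ‖u'‖ from by exact norm_smul ((δ / (C + 1))⁻¹) u',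
          Real.norm_eq_abs, abs_of_pos (inv_pos.mpr hη)]
        calc (δ / (C + 1))⁻¹ * ‖u'‖ ≤ (δ / (C + 1))⁻¹ * (δ / (C + 1)) :=
              mul_le_mul_of_nonneg_left hn (inv_pos.mpr hη).le
          _ = 1 := inv_mul_cancel₀ hη.ne'
      have h2 := hC ((δ / (C + 1))⁻¹ • u') (by simp [h0]) h1
      have h3 : T u' = (δ / (C + 1)) • T ((δ / (C + 1))⁻¹ • u') := by
        rw [map_smul, smul_smul, mul_inv_cancel₀ hη.ne', one_smul]
      rw [h3, ContinuousMap.smul_apply, smul_eq_mul, abs_mul, abs_of_pos hη]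
      exact mul_le_mul_of_nonneg_left h2 hη.le
    have hηC : δ / (C + 1) * C ≤ δ := by
      rw [div_mul_eq_mul_div, div_le_iff₀ hC1]
      nlinarith
    linarith
  · intro hpt x y hy hxy
    have hnn : (0 : ℝ) ≤ ε * ‖x‖ := mul_nonneg hε (norm_nonneg x)
    rw [ContinuousMap.norm_le _ hnn]
    intro s
    have h0 : |x s| ⊓ y s = 0 := by
      have := DFunLike.congr_fun hxy s
      simpa [ContinuousMap.inf_apply, ContinuousMap.abs_apply] using this
    have hys : 0 ≤ y s := by
      have := ContinuousMap.le_def.mp hy s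
      simpa using this
    rw [Real.norm_eq_abs]
    have happ : (|T x| ⊓ y) s = |T x s| ⊓ y s := by
      simp [ContinuousMap.inf_apply, ContinuousMap.abs_apply]
    rw [happ]
    rcases le_or_gt (|x s|) (y s) with h | h
    · have hx0 : x s = 0 := by
        have habs : |x s| = 0 := by rw [← h0, inf_eq_left.mpr h]
        exact abs_eq_zero.mp habs
      have h1 : |T x s| ≤ ε * ‖x‖ := hpt x s hx0
      have h2 : |T x s| ⊓ y s ≤ |T x s| := inf_le_left
      rw [abs_of_nonneg (le_inf (abs_nonneg _) hys)]
      exact h2.trans h1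
    · have hy0 : y s = 0 := by rw [← h0, inf_eq_right.mpr h.le]
      rw [hy0, inf_eq_right.mpr (abs_nonneg _)]
      simpa using hnn
end

section
/- Let K be a compact Hausdorff space, let C(K) denote the Banach lattice of continuous real-valued functions on K with supremum norm and pointwise order, let ε ≥ 0, and let T : C(K) → C(K) be a bounded linear operator that is ε-band preserving. Set φ = T(𝟙), where 𝟙 is the constant function 1. Then for every f ∈ C(K), ‖T f − φ·f‖ ≤ 2ε·‖f‖ (here φ·f denotes the pointwise product, and f ↦ φ·f is a band preserving operator). Moreover, if T is positive then φ ≥ 0. -/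
/-- `S` is band preserving (equivalently, `0`-band preserving). -/
def IsBandPreserving {X : Type*} [NormedAddCommGroup X] [Lattice X] (S : X → X) : Prop :=
  ∀ x y : X, 0 ≤ y → |x| ⊓ y = 0 → |S x| ⊓ y = 0

open ContinuousMap in
lemma aux_point {K : Type*} [TopologicalSpace K] [CompactSpace K] [T2Space K]
    (ε : ℝ) (hε : 0 ≤ ε) (T : C(K, ℝ) →L[ℝ] C(K, ℝ)) (hT : IsEpsBandPreserving ε ⇑T)
    (g : C(K, ℝ)) (t : K) (hg : g t = 0) : |T g t| ≤ ε * ‖g‖ := by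
  refine le_of_forall_pos_le_add fun η hη => ?_
  set δ : ℝ := η / (‖T‖ + 1) with hδdef
  have hTn : (0:ℝ) ≤ ‖T‖ := norm_nonneg T
  have hδ : 0 < δ := div_pos hη (by positivity)
  set r : C(K, ℝ) := (g ⊓ const K δ) ⊔ const K (-δ) with hrdef
  set h : C(K, ℝ) := g - r with hhdef
  have hr_apply : ∀ s, r s = max (min (g s) δ) (-δ) := by
    intro s
    rw [hrdef]
    simp [sup_apply, inf_apply]
  have hh_apply : ∀ s, h s = g s - max (min (g s) δ) (-δ) := by
    intro s
    rw [hhdef, ContinuousMap.sub_apply, hr_apply]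
  have hr_abs : ∀ s, |r s| ≤ δ := by
    intro s
    rw [hr_apply, abs_le]
    exact ⟨le_max_right _ _, max_le (min_le_right _ _) (by linarith)⟩
  have hh0 : ∀ s, |g s| ≤ δ → h s = 0 := by
    intro s hs
    rw [abs_le] at hs
    rw [hh_apply, min_eq_left hs.2, max_eq_left hs.1, sub_self]
  have hgb : ∀ s, |g s| ≤ ‖g‖ := by
    intro s
    simpa [Real.norm_eq_abs] using g.norm_coe_le_norm s
  have hh_abs : ∀ s, |h s| ≤ ‖g‖ := by
    intro s
    rcases le_or_gt (|g s|) δ with hs | hs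
    · rw [hh0 s hs]; simpa using norm_nonneg g
    · have h1 := hgb s
      rw [hh_apply]
      rcases lt_or_ge δ (g s) with h2 | h2
      · rw [min_eq_right h2.le, max_eq_left (by linarith), abs_le]
        rw [abs_le] at h1
        constructor <;> linarith
      · have h3 : g s < -δ := by
          rcases lt_abs.1 hs with h4 | h4
          · linarith
          · linarith
        rw [min_eq_left (by linarith), max_eq_right h3.le, abs_le]
        rw [abs_le] at h1
        constructor <;> linarith
  have hh_norm : ‖h‖ ≤ ‖g‖ :=
    (norm_le _ (norm_nonneg g)).2 fun s => by simpa [Real.norm_eq_abs] using hh_abs s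
  -- Urysohn
  set S : Set K := {s | δ ≤ |g s|} with hSdef
  have hScl : IsClosed S := isClosed_le continuous_const (continuous_abs.comp g.continuous)
  have htS : t ∉ S := by simp [hSdef, hg]; linarith
  obtain ⟨y, hy0, hy1, hy01⟩ := exists_continuous_zero_one_of_isClosed hScl
    (isClosed_singleton (x := t)) (Set.disjoint_singleton_right.2 htS)
  set M : ℝ := ε * ‖g‖ + 1 with hMdef
  have hM : 0 < M := by positivity
  set Y : C(K, ℝ) := M • y with hYdef
  have hYa : ∀ s, Y s = M * y s := fun s => rfl
  have hY0 : (0 : C(K, ℝ)) ≤ Y := by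
    refine ContinuousMap.le_def.2 fun s => ?_
    have := (hy01 s).1
    simp only [ContinuousMap.zero_apply, hYa]
    positivity
  have hband : |h| ⊓ Y = 0 := by
    ext s
    simp only [inf_apply, abs_apply, ContinuousMap.zero_apply]
    rcases le_or_gt δ (|g s|) with hs | hs
    · have : y s = 0 := hy0 hs
      rw [hYa, this, mul_zero]
      exact min_eq_right (abs_nonneg _)
    · rw [hh0 s hs.le, abs_zero]
      refine min_eq_left ?_
      have := (hy01 s).1
      rw [hYa]; positivity
  have hb := hT h Y hY0 hband
  have hval : min (|T h t|) M ≤ ε * ‖g‖ := by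
    have h1 : (|T h| ⊓ Y) t ≤ ‖|T h| ⊓ Y‖ := by
      calc (|T h| ⊓ Y) t ≤ |( |T h| ⊓ Y) t| := le_abs_self _
      _ ≤ ‖|T h| ⊓ Y‖ := by
          simpa [Real.norm_eq_abs] using (|T h| ⊓ Y).norm_coe_le_norm t
    have h2 : (|T h| ⊓ Y) t = min (|T h t|) M := by
      have hyt : y t = 1 := hy1 rfl
      simp [inf_apply, abs_apply, hYa, hyt]
    have h3 : ε * ‖h‖ ≤ ε * ‖g‖ := mul_le_mul_of_nonneg_left hh_norm hε
    rw [h2] at h1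
    linarith [hb]
  have hTh : |T h t| ≤ ε * ‖g‖ := by
    rcases min_le_iff.1 hval with h1 | h1
    · exact h1
    · exfalso; rw [hMdef] at h1; linarith
  have hr_norm : ‖r‖ ≤ δ :=
    (norm_le _ hδ.le).2 fun s => by simpa [Real.norm_eq_abs] using hr_abs s
  have hTr : |T r t| ≤ ‖T‖ * δ := by
    have h1 : ‖T r‖ ≤ ‖T‖ * ‖r‖ := T.le_opNorm r
    have h2 : |T r t| ≤ ‖T r‖ := by
      simpa [Real.norm_eq_abs] using (T r).norm_coe_le_norm t
    have h3 : ‖T‖ * ‖r‖ ≤ ‖T‖ * δ := mul_le_mul_of_nonneg_left hr_norm hTn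
    linarith
  have hgr : g = h + r := by rw [hhdef]; ring
  have hTg : T g t = T h t + T r t := by
    rw [hgr, map_add]; simp
  have hTδ : ‖T‖ * δ ≤ η := by
    rw [hδdef, mul_comm, div_mul_eq_mul_div, div_le_iff₀ (by positivity)]
    nlinarith
  calc |T g t| ≤ |T h t| + |T r t| := by rw [hTg]; exact abs_add_le _ _
    _ ≤ ε * ‖g‖ + ‖T‖ * δ := add_le_add hTh hTr
    _ ≤ ε * ‖g‖ + η := by linarith

/-- For an `ε`-band preserving bounded operator `T` on `C(K)`, with `φ = T 𝟙`:
multiplication by `φ` is a band preserving operator satisfying `‖T f − φ f‖ ≤ 2 ε ‖f‖`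
for every `f`; moreover, if `T` is positive then `φ ≥ 0`. -/
theorem epsBP_close_to_multiplication_on_CK {K : Type*} [TopologicalSpace K]
    [CompactSpace K] [T2Space K] (ε : ℝ) (hε : 0 ≤ ε)
    (T : C(K, ℝ) →L[ℝ] C(K, ℝ)) (hT : IsEpsBandPreserving ε ⇑T) :
    (∀ f : C(K, ℝ), ‖T f - T 1 * f‖ ≤ 2 * ε * ‖f‖) ∧
    IsBandPreserving (fun f : C(K, ℝ) => T 1 * f) ∧
    ((∀ f : C(K, ℝ), 0 ≤ f → 0 ≤ T f) → 0 ≤ T 1) := by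
  refine ⟨?_, ?_, ?_⟩
  · intro f
    refine (ContinuousMap.norm_le _ (by positivity)).2 fun t => ?_
    set g : C(K, ℝ) := f - f t • (1 : C(K, ℝ)) with hgdef
    have hgt : g t = 0 := by simp [hgdef]
    have hgn : ‖g‖ ≤ 2 * ‖f‖ := by
      have h1 : ‖f t • (1 : C(K, ℝ))‖ ≤ ‖f‖ := by
        refine (ContinuousMap.norm_le _ (norm_nonneg f)).2 fun s => ?_
        simp only [ContinuousMap.smul_apply, ContinuousMap.one_apply, smul_eq_mul, mul_one]
        simpa [Real.norm_eq_abs] using f.norm_coe_le_norm t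
      calc ‖g‖ ≤ ‖f‖ + ‖f t • (1 : C(K, ℝ))‖ := norm_sub_le _ _
        _ ≤ 2 * ‖f‖ := by linarith
    have key := aux_point ε hε T hT g t hgt
    have hTgt : T g t = (T f - T 1 * f) t := by
      rw [hgdef, map_sub, map_smul]
      simp only [ContinuousMap.sub_apply, ContinuousMap.smul_apply, smul_eq_mul,
        ContinuousMap.mul_apply]
      ring
    have : |(T f - T 1 * f) t| ≤ ε * ‖g‖ := by rw [← hTgt]; exact key
    rw [Real.norm_eq_abs]
    calc |(T f - T 1 * f) t| ≤ ε * ‖g‖ := this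
      _ ≤ ε * (2 * ‖f‖) := mul_le_mul_of_nonneg_left hgn hε
      _ = 2 * ε * ‖f‖ := by ring
  · intro x y hy hxy
    ext s
    have h1 : min (|x s|) (y s) = 0 := by
      have := congrArg (fun u : C(K, ℝ) => u s) hxy
      simpa [ContinuousMap.inf_apply, ContinuousMap.abs_apply] using this
    have hys : 0 ≤ y s := by
      have := ContinuousMap.le_def.1 hy s
      simpa using this
    simp only [ContinuousMap.inf_apply, ContinuousMap.abs_apply, ContinuousMap.mul_apply, ContinuousMap.zero_apply]
    rcases min_eq_iff.1 h1 with ⟨h2, _⟩ | ⟨h2, _⟩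
    · have : x s = 0 := abs_eq_zero.1 h2
      rw [this, mul_zero, abs_zero]
      exact min_eq_left hys
    · rw [h2]
      exact min_eq_right (abs_nonneg _)
  · intro hpos
    exact hpos 1 (ContinuousMap.le_def.2 fun s => by simp)
end

section
/- Let K be a compact Hausdorff space, let C(K) denote the Banach lattice of continuous real-valued functions on K with supremum norm and pointwise order, let ε ≥ 0, and let T : C(K) → C(K) be a bounded linear operator that is ε-band preserving. Then T is ε-disjointness preserving: for all x, y ∈ C(K) with |x| ⊓ |y| = 0, one has ‖|T x| ⊓ |T y|‖ ≤ ε·max(‖x‖, ‖y‖). Moreover, for all disjoint x, y ∈ C(K), the pointwise product satisfies ‖(T x)·(T y)‖ ≤ ε·‖T‖·‖x‖·‖y‖. -/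
section Aux

variable {K : Type*} [TopologicalSpace K] [CompactSpace K] [T2Space K]

/-- Pointwise form of disjointness in `C(K, ℝ)`. -/
lemma ptwise_disj {x y : C(K, ℝ)} (h : |x| ⊓ |y| = 0) (s : K) :
    min |x s| |y s| = 0 := by
  have := DFunLike.congr_fun h s
  simpa [ContinuousMap.inf_apply, ContinuousMap.abs_apply, min_def] using this

/-- Off the closure of the support of `x`, the value of `T x` is at most `ε ‖x‖`. -/
lemma lemB (ε : ℝ) (T : C(K, ℝ) →L[ℝ] C(K, ℝ)) (hT : IsEpsBandPreserving ε ⇑T)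
    (x : C(K, ℝ)) {t : K} (ht : t ∉ closure {s | x s ≠ 0}) :
    |T x t| ≤ ε * ‖x‖ := by
  obtain ⟨f, hf0, hf1, hf01⟩ := exists_continuous_zero_one_of_isClosed
    (isClosed_closure (s := {s | x s ≠ 0})) (isClosed_singleton (x := t))
    (by simpa [Set.disjoint_singleton_right] using ht)
  set c : ℝ := |T x t| with hc
  have hc0 : (0:ℝ) ≤ c := abs_nonneg _
  set z : C(K, ℝ) := c • f with hzdef
  have hzapp : ∀ s, z s = c * f s := fun s => rfl
  have hz0 : (0:C(K, ℝ)) ≤ z := by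
    rw [ContinuousMap.le_def]
    intro s
    simpa [hzapp] using mul_nonneg hc0 (hf01 s).1
  have hdisj : |x| ⊓ z = 0 := by
    ext s
    simp only [ContinuousMap.inf_apply, ContinuousMap.abs_apply, ContinuousMap.zero_apply, hzapp]
    by_cases hxs : x s = 0
    · have : z s = c * f s := rfl
      rw [hxs]
      simp only [abs_zero]
      exact min_eq_left (mul_nonneg hc0 (hf01 s).1) ▸ (by
        simpa using min_eq_left (mul_nonneg hc0 (hf01 s).1))
    · have hfs : f s = 0 := hf0 (subset_closure hxs)
      simp [hfs, abs_nonneg]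
  have hbnd := hT x z hz0 hdisj
  have hval : (|T x| ⊓ z) t = c := by
    have hft : f t = 1 := hf1 rfl
    simp [ContinuousMap.inf_apply, ContinuousMap.abs_apply, hzapp, hft, ← hc]
  calc c = (|T x| ⊓ z) t := hval.symm
    _ ≤ ‖(|T x| ⊓ z) t‖ := le_abs_self _
    _ ≤ ‖|T x| ⊓ z‖ := ContinuousMap.norm_coe_le_norm _ _
    _ ≤ ε * ‖x‖ := hbnd

/-- On the closure of the support of `y`, `min(|Tx|,|Ty|) ≤ ε ‖x‖`. -/
lemma lemA (ε : ℝ) (T : C(K, ℝ) →L[ℝ] C(K, ℝ)) (hT : IsEpsBandPreserving ε ⇑T)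
    (x y : C(K, ℝ)) (hxy : |x| ⊓ |y| = 0) {t : K} (ht : t ∈ closure {s | y s ≠ 0}) :
    min |T x t| |T y t| ≤ ε * ‖x‖ := by
  set g : C(K, ℝ) := |T x| ⊓ |T y| with hg
  have hgapp : ∀ s, g s = min |T x s| |T y s| := by
    intro s; simp [hg, ContinuousMap.inf_apply, ContinuousMap.abs_apply, min_def]
  have hSclosed : IsClosed {s | g s ≤ ε * ‖x‖} :=
    isClosed_Iic.preimage g.continuous
  have hsub : {s | y s ≠ 0} ⊆ {s | g s ≤ ε * ‖x‖} := by
    intro s hs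
    have hys : y s ≠ 0 := hs
    have hxs : |x s| = 0 := by
      have h0 := ptwise_disj hxy s
      rcases min_eq_iff.mp h0 with ⟨h, _⟩ | ⟨h, _⟩
      · exact h
      · exact absurd (abs_eq_zero.mp h) hys
    set c : ℝ := |T y s| / |y s| with hc
    have hc0 : (0:ℝ) ≤ c := div_nonneg (abs_nonneg _) (abs_nonneg _)
    set z : C(K, ℝ) := |T y| ⊓ (c • |y|) with hzdef
    have hzapp : ∀ u, z u = min |T y u| (c * |y u|) := by
      intro u; simp [hzdef, ContinuousMap.inf_apply, ContinuousMap.abs_apply, min_def]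
    have hz0 : (0:C(K, ℝ)) ≤ z := by
      rw [ContinuousMap.le_def]
      intro u
      rw [ContinuousMap.zero_apply, hzapp]
      exact le_min (abs_nonneg _) (mul_nonneg hc0 (abs_nonneg _))
    have hdisj : |x| ⊓ z = 0 := by
      ext u
      rw [ContinuousMap.inf_apply, ContinuousMap.abs_apply, ContinuousMap.zero_apply, hzapp]
      have h0 := ptwise_disj hxy u
      rcases min_eq_iff.mp h0 with ⟨h, _⟩ | ⟨h, _⟩
      · rw [h]
        exact min_eq_left (le_min (abs_nonneg _) (mul_nonneg hc0 (abs_nonneg _)))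
      · rw [h, mul_zero]
        have : min |T y u| (0:ℝ) = 0 := min_eq_right (abs_nonneg _)
        rw [this]
        exact min_eq_right (abs_nonneg _)
    have hbnd := hT x z hz0 hdisj
    have hcy : c * |y s| = |T y s| := by
      rw [hc]
      field_simp
    have hval : (|T x| ⊓ z) s = min |T x s| |T y s| := by
      rw [ContinuousMap.inf_apply, ContinuousMap.abs_apply, hzapp, hcy, min_self]
    have hmin0 : (0:ℝ) ≤ min |T x s| |T y s| := le_min (abs_nonneg _) (abs_nonneg _)
    have : min |T x s| |T y s| ≤ ε * ‖x‖ := by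
      calc min |T x s| |T y s| = (|T x| ⊓ z) s := hval.symm
        _ ≤ ‖(|T x| ⊓ z) s‖ := le_abs_self _
        _ ≤ ‖|T x| ⊓ z‖ := ContinuousMap.norm_coe_le_norm _ _
        _ ≤ ε * ‖x‖ := hbnd
    simpa [hgapp] using this
  have : t ∈ {s | g s ≤ ε * ‖x‖} := (hSclosed.closure_subset_iff.mpr hsub) ht
  simpa [hgapp] using this

/-- Pointwise min bound. -/
lemma ptMin (ε : ℝ) (hε : 0 ≤ ε) (T : C(K, ℝ) →L[ℝ] C(K, ℝ))
    (hT : IsEpsBandPreserving ε ⇑T) (x y : C(K, ℝ)) (hxy : |x| ⊓ |y| = 0) (t : K) :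
    min |T x t| |T y t| ≤ ε * max ‖x‖ ‖y‖ := by
  by_cases h1 : t ∈ closure {s | y s ≠ 0}
  · exact (lemA ε T hT x y hxy h1).trans
      (mul_le_mul_of_nonneg_left (le_max_left _ _) hε)
  by_cases h2 : t ∈ closure {s | x s ≠ 0}
  · have hxy' : |y| ⊓ |x| = 0 := by rwa [inf_comm] at hxy
    have := lemA ε T hT y x hxy' h2
    rw [min_comm]
    exact this.trans (mul_le_mul_of_nonneg_left (le_max_right _ _) hε)
  · have := lemB ε T hT x h2
    exact (min_le_left _ _).trans
      (this.trans (mul_le_mul_of_nonneg_left (le_max_left _ _) hε))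

end Aux

/-- An `ε`-band preserving bounded operator `T` on `C(K)` is `ε`-disjointness preserving:
`‖|T x| ⊓ |T y|‖ ≤ ε max(‖x‖,‖y‖)` for disjoint `x, y`; moreover the pointwise product
satisfies `‖(T x)(T y)‖ ≤ ε ‖T‖ ‖x‖ ‖y‖` for disjoint `x, y`. -/
theorem epsBP_implies_epsDP_on_CK {K : Type*} [TopologicalSpace K] [CompactSpace K]
    [T2Space K] (ε : ℝ) (hε : 0 ≤ ε) (T : C(K, ℝ) →L[ℝ] C(K, ℝ))
    (hT : IsEpsBandPreserving ε ⇑T) :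
    (∀ x y : C(K, ℝ), |x| ⊓ |y| = 0 → ‖|T x| ⊓ |T y|‖ ≤ ε * max ‖x‖ ‖y‖) ∧
    (∀ x y : C(K, ℝ), |x| ⊓ |y| = 0 → ‖T x * T y‖ ≤ ε * ‖T‖ * ‖x‖ * ‖y‖) := by
  constructor
  · intro x y hxy
    have hC : (0:ℝ) ≤ ε * max ‖x‖ ‖y‖ :=
      mul_nonneg hε (le_trans (norm_nonneg x) (le_max_left _ _))
    rw [ContinuousMap.norm_le _ hC]
    intro t
    have h1 := ptMin ε hε T hT x y hxy t
    have h0 : (0:ℝ) ≤ min |T x t| |T y t| := le_min (abs_nonneg _) (abs_nonneg _)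
    have : (|T x| ⊓ |T y|) t = min |T x t| |T y t| := by
      simp [ContinuousMap.inf_apply, ContinuousMap.abs_apply, min_def]
    rw [Real.norm_eq_abs, this, abs_of_nonneg h0]
    exact h1
  · intro x y hxy
    by_cases hx : x = 0
    · subst hx
      simp only [map_zero, zero_mul, norm_zero]
      positivity
    by_cases hy : y = 0
    · subst hy
      simp only [map_zero, mul_zero, norm_zero]
      positivity
    have hxn : (0:ℝ) < ‖x‖ := norm_pos_iff.mpr hx
    have hyn : (0:ℝ) < ‖y‖ := norm_pos_iff.mpr hy
    set x' : C(K, ℝ) := ‖x‖⁻¹ • x with hx'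
    set y' : C(K, ℝ) := ‖y‖⁻¹ • y with hy'
    have hx'n : ‖x'‖ = 1 := by
      rw [hx', norm_smul (‖x‖⁻¹) x, norm_inv, norm_norm, inv_mul_cancel₀ hxn.ne']
    have hy'n : ‖y'‖ = 1 := by
      rw [hy', norm_smul (‖y‖⁻¹) y, norm_inv, norm_norm, inv_mul_cancel₀ hyn.ne']
    have hx'app : ∀ s, x' s = ‖x‖⁻¹ * x s := fun s => rfl
    have hy'app : ∀ s, y' s = ‖y‖⁻¹ * y s := fun s => rfl
    have hxy' : |x'| ⊓ |y'| = 0 := by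
      ext s
      rw [ContinuousMap.inf_apply, ContinuousMap.abs_apply, ContinuousMap.abs_apply,
        ContinuousMap.zero_apply, hx'app, hy'app]
      have h0 := ptwise_disj hxy s
      rcases min_eq_iff.mp h0 with ⟨h, _⟩ | ⟨h, _⟩
      · rw [abs_eq_zero.mp h, mul_zero, abs_zero]
        exact min_eq_left (abs_nonneg _)
      · rw [abs_eq_zero.mp h, mul_zero, abs_zero]
        exact min_eq_right (abs_nonneg _)
    have hTx' : ∀ s, T x s = ‖x‖ * T x' s := by
      intro s
      have : T x = ‖x‖ • T x' := by
        rw [hx', map_smul, smul_smul, mul_inv_cancel₀ hxn.ne', one_smul]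
      rw [this]; rfl
    have hTy' : ∀ s, T y s = ‖y‖ * T y' s := by
      intro s
      have : T y = ‖y‖ • T y' := by
        rw [hy', map_smul, smul_smul, mul_inv_cancel₀ hyn.ne', one_smul]
      rw [this]; rfl
    have hC : (0:ℝ) ≤ ε * ‖T‖ * ‖x‖ * ‖y‖ := by positivity
    rw [ContinuousMap.norm_le _ hC]
    intro t
    have hmin : min |T x' t| |T y' t| ≤ ε := by
      have := ptMin ε hε T hT x' y' hxy' t
      rwa [hx'n, hy'n, max_self, mul_one] at this
    have hmax : max |T x' t| |T y' t| ≤ ‖T‖ := by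
      apply max_le
      · calc |T x' t| = ‖T x' t‖ := (Real.norm_eq_abs _).symm
          _ ≤ ‖T x'‖ := ContinuousMap.norm_coe_le_norm _ _
          _ ≤ ‖T‖ * ‖x'‖ := T.le_opNorm _
          _ = ‖T‖ := by rw [hx'n, mul_one]
      · calc |T y' t| = ‖T y' t‖ := (Real.norm_eq_abs _).symm
          _ ≤ ‖T y'‖ := ContinuousMap.norm_coe_le_norm _ _
          _ ≤ ‖T‖ * ‖y'‖ := T.le_opNorm _
          _ = ‖T‖ := by rw [hy'n, mul_one]
    have hprod : |T x' t| * |T y' t| ≤ ε * ‖T‖ := by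
      have h1 : |T x' t| * |T y' t|
          = min |T x' t| |T y' t| * max |T x' t| |T y' t| := by
        rcases le_total (|T x' t|) (|T y' t|) with h | h
        · rw [min_eq_left h, max_eq_right h]
        · rw [min_eq_right h, max_eq_left h]; ring
      rw [h1]
      exact mul_le_mul hmin hmax (le_max_of_le_left (abs_nonneg _)) hε
    have : ‖(T x * T y) t‖ = ‖x‖ * ‖y‖ * (|T x' t| * |T y' t|) := by
      rw [ContinuousMap.mul_apply, Real.norm_eq_abs, abs_mul, hTx' t, hTy' t,
        abs_mul, abs_mul, abs_of_nonneg hxn.le, abs_of_nonneg hyn.le]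
      ring
    rw [this]
    calc ‖x‖ * ‖y‖ * (|T x' t| * |T y' t|) ≤ ‖x‖ * ‖y‖ * (ε * ‖T‖) := by
          apply mul_le_mul_of_nonneg_left hprod (by positivity)
      _ = ε * ‖T‖ * ‖x‖ * ‖y‖ := by ring
end
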